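/- (Strict MIC of the staircase mechanism.) Fix the staircase mechanism with parameters k, M, ε, and any fixed tie-breaking rule. For every finite multiset b of bids, every sub-multiset S of b, and every finite multiset F of fake bids injected by the miner with |S| + |F| ≤ k, the miner's strategic utility t(S ∪ F)·ε − (number of confirmed fake bids of F in the block S ∪ F)·F_{t(S∪F)} is at most t(B*)·ε, where B* consists of the top min(k, |b|) bids of b. That is, the miner's utility is maximized by including the top bids and injecting no fake bids. -/
import Mathlib


/-- Payment levels of the staircase mechanism: F_i = F_0 + i·ε with
F_0 = M − min(⌊M/ε⌋, k)·ε. -/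
noncomputable def staircaseF (k : ℕ) (M ε : ℝ) (i : ℕ) : ℝ :=
  (M - (min (Nat.floor (M / ε)) k : ℕ) * ε) + (i : ℝ) * ε

/-- Threshold index t(B) of a block B: the largest i such that the i-th
largest bid of B is at least F_i, equivalently such that B contains at least
i bids that are ≥ F_i (and 0 if there is no such i ≥ 1). -/
noncomputable def staircaseThresh (k : ℕ) (M ε : ℝ) (B : Multiset ℝ) : ℕ :=
  (Finset.range (Multiset.card B + 1)).sup
    (fun i => if i ≤ Multiset.card (B.filter (fun x => staircaseF k M ε i ≤ x)) then i else 0)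

lemma staircaseF_nonneg (k : ℕ) (M ε : ℝ) (hM : 0 ≤ M) (hε : 0 < ε) (i : ℕ) :
    0 ≤ staircaseF k M ε i := by
  unfold staircaseF
  have h1 : ((min (Nat.floor (M / ε)) k : ℕ) : ℝ) * ε ≤ M := by
    calc ((min (Nat.floor (M / ε)) k : ℕ) : ℝ) * ε
        ≤ (Nat.floor (M / ε) : ℝ) * ε := by
          apply mul_le_mul_of_nonneg_right _ hε.le
          exact_mod_cast min_le_left _ _
      _ ≤ (M / ε) * ε := mul_le_mul_of_nonneg_right (Nat.floor_le (by positivity)) hε.le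
      _ = M := div_mul_cancel₀ _ hε.ne'
  have h2 : 0 ≤ (i : ℝ) * ε := by positivity
  linarith

lemma staircase_thresh_le_card (k : ℕ) (M ε : ℝ) (B : Multiset ℝ) :
    staircaseThresh k M ε B ≤ Multiset.card B := by
  unfold staircaseThresh
  apply Finset.sup_le
  intro i hi
  simp only [Finset.mem_range] at hi
  split
  · omega
  · exact Nat.zero_le _

lemma staircase_thresh_spec (k : ℕ) (M ε : ℝ) (B : Multiset ℝ) :
    staircaseThresh k M ε B ≤
      Multiset.card (B.filter (fun x => staircaseF k M ε (staircaseThresh k M ε B) ≤ x)) := by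
  obtain ⟨i, hi, heq⟩ := Finset.exists_mem_eq_sup (Finset.range (Multiset.card B + 1))
    ⟨0, Finset.mem_range.mpr (Nat.succ_pos _)⟩
    (fun i => if i ≤ Multiset.card (B.filter (fun x => staircaseF k M ε i ≤ x)) then i else 0)
  have h : staircaseThresh k M ε B =
      if i ≤ Multiset.card (B.filter (fun x => staircaseF k M ε i ≤ x)) then i else 0 := heq
  split_ifs at h with hc
  · rw [h]; exact hc
  · rw [h]; exact Nat.zero_le _

lemma staircase_le_thresh (k : ℕ) (M ε : ℝ) (B : Multiset ℝ) (j : ℕ)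
    (hj : j ≤ Multiset.card B)
    (hcnt : j ≤ Multiset.card (B.filter (fun x => staircaseF k M ε j ≤ x))) :
    j ≤ staircaseThresh k M ε B := by
  have hmem : j ∈ Finset.range (Multiset.card B + 1) := Finset.mem_range.mpr (by omega)
  calc j = if j ≤ Multiset.card (B.filter (fun x => staircaseF k M ε j ≤ x)) then j else 0 :=
        (if_pos hcnt).symm
    _ ≤ staircaseThresh k M ε B := Finset.le_sup (f := fun i =>
        if i ≤ Multiset.card (B.filter (fun x => staircaseF k M ε i ≤ x)) then i else 0) hmem

lemma count_transfer (F : ℝ) (A B : Multiset ℝ) (hA : A ≤ B) (t : ℕ)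
    (htA : t ≤ Multiset.card A)
    (htB : t ≤ Multiset.card (B.filter (fun x => F ≤ x)))
    (htop : ∀ x ∈ A, ∀ y ∈ B - A, y ≤ x) :
    t ≤ Multiset.card (A.filter (fun x => F ≤ x)) := by
  by_cases h : ∀ x ∈ A, F ≤ x
  · rw [Multiset.filter_eq_self.mpr h]; exact htA
  · push_neg at h
    obtain ⟨x, hx, hxF⟩ := h
    have hsub : (B - A).filter (fun x => F ≤ x) = 0 := by
      rw [Multiset.filter_eq_nil]
      intro y hy hFy
      exact absurd (le_trans hFy (htop x hx y hy)) (not_le.mpr hxF)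
    have hB : B.filter (fun x => F ≤ x)
        = A.filter (fun x => F ≤ x) + (B - A).filter (fun x => F ≤ x) := by
      rw [← Multiset.filter_add, add_tsub_cancel_of_le hA]
    rw [hB, hsub, add_zero] at htB
    exact htB

/-- Strict MIC of the staircase mechanism (for an arbitrary tie-breaking rule,
modelled by quantifying over every admissible choice of confirmed
sub-multiset): for every multiset b of bids, every sub-multiset S of b, and
every multiset Fk of fake bids injected by the miner with |S| + |Fk| ≤ k, the
miner's strategic utility t(S + Fk)·ε − (#confirmed fake bids)·F_{t(S+Fk)} is
at most the honest revenue t(B*)·ε, where B* is the block formed by the top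
min(k, |b|) bids of b. -/
theorem staircase_strict_MIC
    (k : ℕ) (hk : 1 ≤ k) (M ε : ℝ) (hM : 0 < M) (hε : 0 < ε)
    (b : Multiset ℝ) (hb : ∀ x ∈ b, (0:ℝ) ≤ x)
    (S Fk : Multiset ℝ) (hS : S ≤ b) (hFk0 : ∀ x ∈ Fk, (0:ℝ) ≤ x)
    (hsize : Multiset.card S + Multiset.card Fk ≤ k)
    -- the confirmed bids of the strategic block S + Fk: its t largest bids
    (CS CF : Multiset ℝ) (hCS : CS ≤ S) (hCF : CF ≤ Fk)
    (hCcard : Multiset.card (CS + CF) = staircaseThresh k M ε (S + Fk))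
    (hCtop : ∀ x ∈ CS + CF, ∀ y ∈ (S + Fk) - (CS + CF), y ≤ x)
    -- the honest block: top min(k, |b|) bids of b
    (Bstar : Multiset ℝ) (hBstar : Bstar ≤ b)
    (hBcard : Multiset.card Bstar = min k (Multiset.card b))
    (hBtop : ∀ x ∈ Bstar, ∀ y ∈ b - Bstar, y ≤ x) :
    (staircaseThresh k M ε (S + Fk) : ℝ) * ε
      - (Multiset.card CF : ℝ) * staircaseF k M ε (staircaseThresh k M ε (S + Fk))
    ≤ (staircaseThresh k M ε Bstar : ℝ) * ε := by
  set t := staircaseThresh k M ε (S + Fk) with ht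
  have hF0 : 0 ≤ staircaseF k M ε 0 := staircaseF_nonneg k M ε hM.le hε 0
  have hFt : staircaseF k M ε t = staircaseF k M ε 0 + (t : ℝ) * ε := by
    simp [staircaseF]
  have htstar0 : (0:ℝ) ≤ (staircaseThresh k M ε Bstar : ℝ) * ε := by positivity
  rcases Nat.eq_zero_or_pos (Multiset.card CF) with hc | hc
  · -- no fake bids confirmed
    have hCF0 : CF = 0 := Multiset.card_eq_zero.mp hc
    have hCS0 : CS + CF = CS := by rw [hCF0, add_zero]
    have hcard : Multiset.card CS = t := by rw [← hCS0]; exact hCcard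
    have hCSle : CS ≤ S + Fk := le_trans hCS (Multiset.le_add_right _ _)
    have htspec := staircase_thresh_spec k M ε (S + Fk)
    have htCS : t ≤ Multiset.card (CS.filter (fun x => staircaseF k M ε t ≤ x)) := by
      refine count_transfer _ CS (S + Fk) hCSle t (le_of_eq hcard.symm) htspec ?_
      intro x hx y hy
      exact hCtop x (by rw [hCS0]; exact hx) y (by rw [hCS0]; exact hy)
    have htb : t ≤ Multiset.card (b.filter (fun x => staircaseF k M ε t ≤ x)) :=
      le_trans htCS (Multiset.card_le_card
        (Multiset.filter_le_filter _ (le_trans hCS hS)))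
    have htcardb : t ≤ Multiset.card b := by
      rw [← hcard]
      exact Multiset.card_le_card (le_trans hCS hS)
    have htk : t ≤ k := by
      rw [← hcard]
      have := Multiset.card_le_card hCS
      omega
    have htBstar : t ≤ Multiset.card Bstar := by
      rw [hBcard]; exact le_min htk htcardb
    have htBs : t ≤ Multiset.card (Bstar.filter (fun x => staircaseF k M ε t ≤ x)) :=
      count_transfer _ Bstar b hBstar t htBstar htb hBtop
    have key : t ≤ staircaseThresh k M ε Bstar :=
      staircase_le_thresh k M ε Bstar t htBstar htBs
    rw [hc]
    simp only [Nat.cast_zero, zero_mul, sub_zero]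
    exact mul_le_mul_of_nonneg_right (Nat.cast_le.mpr key) hε.le
  · -- at least one fake bid confirmed: utility ≤ 0
    have h1 : (1:ℝ) ≤ (Multiset.card CF : ℝ) := by exact_mod_cast hc
    have hFtnn : 0 ≤ staircaseF k M ε t := staircaseF_nonneg k M ε hM.le hε t
    nlinarith [htstar0, hF0, hFt]
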